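/- arXiv:1203.3875 — 3 statements merged into one kernel-verified Lean document; each statement's English description precedes it below -/
import Mathlib

section
/- Let H be a separable infinite-dimensional Hilbert space and F ∈ B(H) a bounded operator such that 1 − F*F is compact. Then there exists a compact operator K such that 1 − (F+K)*(F+K) is a finite-rank orthogonal projection. -/
open ContinuousLinearMap Metric Filter Topology Set

noncomputable section

section AuxLemmas

variable {H : Type*} [NormedAddCommGroup H] [InnerProductSpace ℂ H] [CompleteSpace H]

lemma aux_ker_findim (F : H →L[ℂ] H) (hF : IsCompactOperator ⇑(1 - adjoint F * F)) :
    FiniteDimensional ℂ (LinearMap.ker (F : H →ₗ[ℂ] H)) := by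
  set N := LinearMap.ker (F : H →ₗ[ℂ] H) with hN
  set C : H →L[ℂ] H := 1 - adjoint F * F with hC
  -- the "unit ball" of N as a subset of H
  have hball : IsCompact ((↑) '' (closedBall 0 1 : Set N) : Set H) := by
    have hF' : IsCompactOperator ⇑(C : H →ₗ[ℂ] H) := hF
    have hcomp : IsCompact (closure (⇑(C : H →ₗ[ℂ] H) '' closedBall 0 1)) :=
      hF'.isCompact_closure_image_closedBall 1
    refine hcomp.of_isClosed_subset ?_ ?_
    · have h1 : IsClosed ((N : Set H)) := ContinuousLinearMap.isClosed_ker F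
      have : ((↑) '' (closedBall 0 1 : Set N) : Set H) = (N : Set H) ∩ closedBall 0 1 := by
        ext x
        constructor
        · rintro ⟨⟨y, hy⟩, hmem, rfl⟩
          refine ⟨hy, ?_⟩
          simpa [Metric.mem_closedBall, dist_zero_right] using hmem
        · rintro ⟨hx, hx1⟩
          exact ⟨⟨x, hx⟩, by simpa [Metric.mem_closedBall, dist_zero_right] using hx1, rfl⟩
      rw [this]
      exact h1.inter Metric.isClosed_closedBall
    · rintro _ ⟨⟨y, hy⟩, hmem, rfl⟩
      refine subset_closure ⟨y, ?_, ?_⟩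
      · simpa [Metric.mem_closedBall, dist_zero_right] using hmem
      · have : F y = 0 := hy
        simp [hC, this]
  have : IsCompact (closedBall 0 1 : Set N) := by
    rw [Topology.IsEmbedding.isCompact_iff (Topology.IsEmbedding.subtypeVal)]
    exact hball
  exact FiniteDimensional.of_isCompact_closedBall₀ ℂ one_pos this

lemma aux_coercive (F p : H →L[ℂ] H) (hF : IsCompactOperator ⇑(1 - adjoint F * F))
    (h0 : ∀ y : H, F y = 0 → p y = 0 → y = 0) :
    ∃ c : ℝ, 0 < c ∧ ∀ x : H, c * ‖x‖ ^ 2 ≤ ‖F x‖ ^ 2 + ‖p x‖ ^ 2 := by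
  by_contra hcon
  push_neg at hcon
  choose u hu using fun n : ℕ => hcon (1 / (n + 1)) (by positivity)
  have hune : ∀ n, u n ≠ 0 := by
    intro n h
    have := hu n
    rw [h] at this
    simp at this
  set v : ℕ → H := fun n => (‖u n‖ : ℂ)⁻¹ • u n with hv
  have hvnorm : ∀ n, ‖v n‖ = 1 := by
    intro n
    have h1 : ‖u n‖ ≠ 0 := norm_ne_zero_iff.2 (hune n)
    simp [hv, norm_smul, inv_mul_cancel₀ h1]
  have hbound : ∀ (A : H →L[ℂ] H), (∀ n : ℕ, ‖A (u n)‖^2 ≤ (1/((n:ℝ)+1)) * ‖u n‖^2) →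
      ∀ n : ℕ, ‖A (v n)‖ ^ 2 ≤ 1 / ((n:ℝ) + 1) := by
    intro A hA n
    have h1 : ‖u n‖ ≠ 0 := norm_ne_zero_iff.2 (hune n)
    have : ‖A (v n)‖ = ‖u n‖⁻¹ * ‖A (u n)‖ := by
      simp [hv, map_smul, norm_smul]
    rw [this, mul_pow]
    have h2 : (0:ℝ) < ‖u n‖^2 := by positivity
    calc ‖u n‖⁻¹ ^ 2 * ‖A (u n)‖ ^ 2 ≤ ‖u n‖⁻¹^2 * ((1/((n:ℝ)+1)) * ‖u n‖^2) := by
          apply mul_le_mul_of_nonneg_left (hA n) (by positivity)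
      _ = 1 / ((n:ℝ)+1) := by field_simp
  have hFv2 : ∀ n : ℕ, ‖F (v n)‖ ^ 2 ≤ 1 / ((n:ℝ) + 1) := by
    apply hbound; intro n; nlinarith [hu n, norm_nonneg (p (u n)), sq_nonneg (‖p (u n)‖)]
  have hpv2 : ∀ n : ℕ, ‖p (v n)‖ ^ 2 ≤ 1 / ((n:ℝ) + 1) := by
    apply hbound; intro n; nlinarith [hu n, norm_nonneg (F (u n)), sq_nonneg (‖F (u n)‖)]
  have key : ∀ (A : H →L[ℂ] H), (∀ n : ℕ, ‖A (v n)‖ ^ 2 ≤ 1 / ((n:ℝ) + 1)) →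
      Tendsto (fun n => A (v n)) atTop (𝓝 0) := by
    intro A hA
    rw [tendsto_zero_iff_norm_tendsto_zero]
    have hsq : Tendsto (fun n : ℕ => ‖A (v n)‖ ^ 2) atTop (𝓝 0) := by
      apply squeeze_zero (fun n => by positivity) hA
      exact tendsto_one_div_add_atTop_nhds_zero_nat
    have h3 := (Real.continuous_sqrt.tendsto 0).comp hsq
    simpa [Function.comp_def, Real.sqrt_sq (norm_nonneg _)] using h3
  have hFv : Tendsto (fun n => F (v n)) atTop (𝓝 0) := key F hFv2
  have hpv : Tendsto (fun n => p (v n)) atTop (𝓝 0) := key p hpv2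
  -- compactness
  set C : H →L[ℂ] H := 1 - adjoint F * F with hC
  have hF' : IsCompactOperator ⇑(C : H →ₗ[ℂ] H) := hF
  have hcomp : IsCompact (closure (⇑(C : H →ₗ[ℂ] H) '' closedBall 0 1)) :=
    hF'.isCompact_closure_image_closedBall 1
  have hmem : ∀ n, C (v n) ∈ closure (⇑(C : H →ₗ[ℂ] H) '' closedBall 0 1) := by
    intro n
    exact subset_closure ⟨v n, by simp [mem_closedBall, dist_zero_right, hvnorm n], rfl⟩
  obtain ⟨y, -, φ, hφ, hcv⟩ := hcomp.tendsto_subseq hmem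
  -- v ∘ φ converges to y
  have hTv : Tendsto (fun n => (adjoint F * F) (v n)) atTop (𝓝 0) := by
    have := ((adjoint F).continuous.tendsto 0).comp hFv
    simpa [Function.comp_def] using this
  have hvy : Tendsto (fun n => v (φ n)) atTop (𝓝 y) := by
    have h1 : ∀ n, v (φ n) = C (v (φ n)) + (adjoint F * F) (v (φ n)) := by
      intro n; simp [hC, sub_apply]
    have hcv' : Tendsto (fun n => C (v (φ n))) atTop (𝓝 y) := by
      simpa [Function.comp_def] using hcv
    have h2 : Tendsto (fun n => C (v (φ n)) + (adjoint F * F) (v (φ n))) atTop (𝓝 (y + 0)) := by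
      refine hcv'.add ?_
      simpa [Function.comp_def] using hTv.comp hφ.tendsto_atTop
    rw [add_zero] at h2
    exact h2.congr (fun n => (h1 n).symm)
  have hyn : ‖y‖ = 1 := by
    have h1 : Tendsto (fun n => ‖v (φ n)‖) atTop (𝓝 ‖y‖) := by
      simpa [Function.comp_def] using (continuous_norm.tendsto y).comp hvy
    have h2 : Tendsto (fun n => ‖v (φ n)‖) atTop (𝓝 1) := by
      simpa [hvnorm] using tendsto_const_nhds (α := ℕ) (f := atTop) (a := (1:ℝ))
    exact tendsto_nhds_unique h1 h2
  have hFy : F y = 0 := by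
    have h1 := (F.continuous.tendsto y).comp hvy
    have h2 := hFv.comp hφ.tendsto_atTop
    exact tendsto_nhds_unique (by simpa [Function.comp_def] using h1) (by simpa [Function.comp_def] using h2)
  have hpy : p y = 0 := by
    have h1 := (p.continuous.tendsto y).comp hvy
    have h2 := hpv.comp hφ.tendsto_atTop
    exact tendsto_nhds_unique (by simpa [Function.comp_def] using h1) (by simpa [Function.comp_def] using h2)
  have := h0 y hFy hpy
  rw [this] at hyn
  simp at hyn

lemma aux_proj_compact (N : Submodule ℂ H) [CompleteSpace N] [FiniteDimensional ℂ N] :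
    IsCompactOperator ⇑(N.subtypeL ∘L N.orthogonalProjectionOnto) := by
  set q : H →L[ℂ] N := N.orthogonalProjectionOnto with hq
  set p : H →L[ℂ] H := N.subtypeL ∘L q with hp
  refine ⟨(↑) '' (closedBall (0 : N) ‖q‖), ?_, ?_⟩
  · exact ((isCompact_closedBall _ _).image N.subtypeL.continuous)
  · refine Filter.mem_of_superset (Metric.closedBall_mem_nhds 0 one_pos) ?_
    intro x hx
    refine ⟨q x, ?_, rfl⟩
    rw [mem_closedBall, dist_zero_right]
    calc ‖q x‖ ≤ ‖q‖ * ‖x‖ := q.le_opNorm x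
      _ ≤ ‖q‖ * 1 := by
          apply mul_le_mul_of_nonneg_left _ (norm_nonneg q)
          simpa [mem_closedBall, dist_zero_right] using hx
      _ = ‖q‖ := mul_one _

end AuxLemmas

set_option maxHeartbeats 1000000 in
/-- If `1 - F*F` is compact, then `F` can be perturbed by a compact operator `K`
so that `1 - (F+K)*(F+K)` is a finite-rank orthogonal projection. -/
theorem exists_compact_perturbation_isometry
    {H : Type*} [NormedAddCommGroup H] [InnerProductSpace ℂ H] [CompleteSpace H]
    [TopologicalSpace.SeparableSpace H] (hinf : ¬ FiniteDimensional ℂ H)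
    (F : H →L[ℂ] H) (hF : IsCompactOperator ⇑(1 - adjoint F * F)) :
    ∃ K : H →L[ℂ] H, IsCompactOperator ⇑K ∧
      (let P : H →L[ℂ] H := 1 - adjoint (F + K) * (F + K)
       P * P = P ∧ IsSelfAdjoint P ∧ FiniteDimensional ℂ (LinearMap.range (P : H →ₗ[ℂ] H))) := by
  set N := LinearMap.ker (F : H →ₗ[ℂ] H) with hN
  haveI : CompleteSpace N := (ContinuousLinearMap.isClosed_ker F).completeSpace_coe
  haveI hNfin : FiniteDimensional ℂ N := aux_ker_findim F hF
  set p : H →L[ℂ] H := N.subtypeL ∘L N.orthogonalProjectionOnto with hp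
  have hp_sa : IsSelfAdjoint p := isSelfAdjoint_starProjection N
  have hp_cpt : IsCompactOperator ⇑p := aux_proj_compact N
  have hpmem : ∀ x : H, p x ∈ N := fun x => SetLike.coe_mem _
  have hp_fix : ∀ x : H, x ∈ N → p x = x := by
    intro x hx
    exact N.starProjection_eq_self_iff.2 hx
  have hpp : p * p = p := by
    ext x
    exact hp_fix (p x) (hpmem x)
  have hFp : F ∘L p = 0 := by
    ext x
    exact hpmem x
  set T : H →L[ℂ] H := adjoint F * F with hT
  set T' : H →L[ℂ] H := T + p with hT'
  have hT_sa : IsSelfAdjoint T := by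
    rw [IsSelfAdjoint, star_mul, star_eq_adjoint, star_eq_adjoint, adjoint_adjoint]
  have hT'_sa : IsSelfAdjoint T' := hT_sa.add hp_sa
  have hT'p : T' * p = p := by
    have h1 : T * p = 0 := by
      rw [hT, mul_assoc]
      have : F * p = 0 := hFp
      rw [this, mul_zero]
    rw [hT', add_mul, h1, hpp, zero_add]
  have hpT' : p * T' = p := by
    have := congrArg star hT'p
    rwa [star_mul, hp_sa.star_eq, hT'_sa.star_eq] at this
  obtain ⟨c, hc, hcoer⟩ : ∃ c : ℝ, 0 < c ∧ ∀ x : H, c * ‖x‖ ^ 2 ≤ ‖F x‖ ^ 2 + ‖p x‖ ^ 2 := by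
    refine aux_coercive F p hF ?_
    intro y hy hpy
    have hyN : y ∈ N := hy
    rw [← hp_fix y hyN]
    exact hpy
  have hressq : ∀ x : H, ContinuousLinearMap.reApplyInnerSelf T' x = ‖F x‖^2 + ‖p x‖^2 := by
    intro x
    rw [ContinuousLinearMap.reApplyInnerSelf]
    have h1 : (inner ℂ (T' x) x : ℂ) = inner ℂ (F x) (F x) + inner ℂ (p x) (p x) := by
      have e1 : T' x = adjoint F (F x) + p x := rfl
      rw [e1, inner_add_left, adjoint_inner_left]
      congr 1
      calc (inner ℂ (p x) x : ℂ) = inner ℂ (p (p x)) x := by rw [hp_fix (p x) (hpmem x)]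
        _ = inner ℂ (p x) (p x) := hp_sa.isSymmetric (p x) x
    rw [h1, map_add, inner_self_eq_norm_sq, inner_self_eq_norm_sq]
  -- positivity of T' - c
  have hpos : (0 : H →L[ℂ] H) ≤ T' - algebraMap ℝ (H →L[ℂ] H) c := by
    rw [ContinuousLinearMap.nonneg_iff_isPositive]
    constructor
    · refine (hT'_sa.sub ?_).isSymmetric
      exact IsSelfAdjoint.algebraMap _ (IsSelfAdjoint.all c)
    · intro x
      rw [ContinuousLinearMap.reApplyInnerSelf]
      have e1 : (T' - algebraMap ℝ (H →L[ℂ] H) c) x = T' x - (c : ℂ) • x := by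
        simp [Algebra.algebraMap_eq_smul_one, Complex.coe_smul]
      rw [e1, inner_sub_left, map_sub, inner_smul_left]
      have e2 : RCLike.re ((starRingEnd ℂ) (c:ℂ) * (inner ℂ x x : ℂ)) = c * ‖x‖^2 := by
        rw [Complex.conj_ofReal, ← inner_self_eq_norm_sq (𝕜 := ℂ) x]
        simp [Complex.mul_re, Complex.ofReal_re, Complex.ofReal_im]
      rw [e2]
      have := hressq x
      rw [ContinuousLinearMap.reApplyInnerSelf] at this
      rw [this]
      nlinarith [hcoer x]
  -- spectrum bounds
  have hspec : ∀ t ∈ spectrum ℝ T', c ≤ t := by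
    intro t ht
    have hsa' : IsSelfAdjoint (T' - algebraMap ℝ (H →L[ℂ] H) c) :=
      hT'_sa.sub (IsSelfAdjoint.algebraMap _ (IsSelfAdjoint.all c))
    have h1 := (StarOrderedRing.nonneg_iff_spectrum_nonneg (R := ℝ) _ hsa').mp hpos
    have h2 : t - c ∈ spectrum ℝ (T' - algebraMap ℝ (H →L[ℂ] H) c) := by
      rw [← spectrum.sub_singleton_eq]
      exact Set.sub_mem_sub ht rfl
    linarith [h1 _ h2]
  have hspec_pos : ∀ t ∈ spectrum ℝ T', 0 < t := fun t ht => lt_of_lt_of_le hc (hspec t ht)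
  -- functional calculus
  set f : ℝ → ℝ := fun t => (Real.sqrt t)⁻¹ with hf
  have hfc : ContinuousOn f (spectrum ℝ T') := by
    apply ContinuousOn.inv₀ (Real.continuous_sqrt.continuousOn)
    exact fun t htm => ne_of_gt (Real.sqrt_pos.2 (hspec_pos t htm))
  set S : H →L[ℂ] H := cfc f T' with hS
  have hS_sa : IsSelfAdjoint S := cfc_predicate f T'
  have hff : ∀ t ∈ spectrum ℝ T', f t * t * f t = 1 := by
    intro t ht
    have h1 : 0 < t := hspec_pos t ht
    have h2 : Real.sqrt t * Real.sqrt t = t := Real.mul_self_sqrt h1.le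
    have h3 : Real.sqrt t ≠ 0 := ne_of_gt (Real.sqrt_pos.2 h1)
    simp only [hf]
    rw [mul_comm _ t, mul_assoc, ← mul_inv, h2, mul_inv_cancel₀ h1.ne']
  have hcfc_mul3 : ∀ (g₁ g₂ g₃ : ℝ → ℝ), ContinuousOn g₁ (spectrum ℝ T') →
      ContinuousOn g₂ (spectrum ℝ T') → ContinuousOn g₃ (spectrum ℝ T') →
      cfc g₁ T' * cfc g₂ T' * cfc g₃ T' = cfc (fun t => g₁ t * g₂ t * g₃ t) T' := by
    intro g₁ g₂ g₃ h₁ h₂ h₃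
    rw [← cfc_mul _ _ T' h₁ h₂, ← cfc_mul (fun t => g₁ t * g₂ t) _ T' (h₁.mul h₂) h₃]
  have hidc : ContinuousOn (fun t : ℝ => t) (spectrum ℝ T') := continuousOn_id
  have hSTS : S * T' * S = 1 := by
    have e : cfc (fun t : ℝ => f t * t * f t) T' = S * T' * S := by
      rw [cfc_mul (fun t : ℝ => f t * t) f T' (hfc.mul hidc) hfc,
        cfc_mul f (fun t : ℝ => t) T' hfc hidc, cfc_id' ℝ T' hT'_sa]
    rw [← e, cfc_congr (fun t ht => hff t ht), cfc_const_one ℝ T']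
  have hT'SS : T' * (S * S) = 1 := by
    have e : cfc (fun t : ℝ => t * (f t * f t)) T' = T' * (S * S) := by
      rw [cfc_mul (fun t : ℝ => t) (fun t : ℝ => f t * f t) T' hidc (hfc.mul hfc),
        cfc_mul f f T' hfc hfc, cfc_id' ℝ T' hT'_sa]
    rw [← e, cfc_congr (g := fun _ => (1:ℝ)) (fun t ht => by
      have h := hff t ht; dsimp only at h ⊢; nlinarith [h]), cfc_const_one ℝ T']
  have hSST' : (S * S) * T' = 1 := by
    have e : cfc (fun t : ℝ => (f t * f t) * t) T' = (S * S) * T' := by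
      rw [cfc_mul (fun t : ℝ => f t * f t) (fun t : ℝ => t) T' (hfc.mul hfc) hidc,
        cfc_mul f f T' hfc hfc, cfc_id' ℝ T' hT'_sa]
    rw [← e, cfc_congr (g := fun _ => (1:ℝ)) (fun t ht => by
      have h := hff t ht; dsimp only at h ⊢; nlinarith [h]), cfc_const_one ℝ T']
  have hSSp : (S * S) * p = p := by
    conv_lhs => rw [← hT'p, ← mul_assoc, hSST']
    rw [one_mul]
  have hpSS : p * (S * S) = p := by
    conv_lhs => rw [← hpT', mul_assoc, hT'SS]
    rw [mul_one]
  -- compactness of S - 1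
  set g : ℝ → ℝ := fun t => -((Real.sqrt t * (Real.sqrt t + 1))⁻¹) with hg
  have hgc : ContinuousOn g (spectrum ℝ T') := by
    apply ContinuousOn.neg
    apply ContinuousOn.inv₀
    · exact Real.continuous_sqrt.continuousOn.mul
        (Real.continuous_sqrt.continuousOn.add continuousOn_const)
    · intro t ht
      have h1 : 0 < Real.sqrt t := Real.sqrt_pos.2 (hspec_pos t ht)
      positivity
  have hfg : ∀ t ∈ spectrum ℝ T', f t - 1 = g t * (t - 1) := by
    intro t ht
    have h1 : 0 < t := hspec_pos t ht
    have h2 : Real.sqrt t * Real.sqrt t = t := Real.mul_self_sqrt h1.le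
    have h3 : (0:ℝ) < Real.sqrt t := Real.sqrt_pos.2 h1
    have h4 : Real.sqrt t + 1 ≠ 0 := by positivity
    simp only [hf, hg]
    field_simp
    nlinarith [h2]
  have h1c : ContinuousOn (fun _ : ℝ => (1:ℝ)) (spectrum ℝ T') := continuousOn_const
  have e_S1 : S - 1 = cfc g T' * (T' - 1) := by
    have e1 : cfc (fun t : ℝ => f t - 1) T' = S - 1 := by
      rw [cfc_sub (R := ℝ) f (fun _ => 1) T' hfc h1c, cfc_const_one ℝ T']
    have e3 : cfc (fun t : ℝ => t - 1) T' = T' - 1 := by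
      rw [cfc_sub (R := ℝ) (fun t => t) (fun _ => 1) T' hidc h1c, cfc_id' ℝ T' hT'_sa,
        cfc_const_one ℝ T']
    rw [← e1, ← e3, ← cfc_mul g (fun t : ℝ => t - 1) T' hgc (hidc.sub h1c)]
    exact cfc_congr hfg
  have hT'1 : IsCompactOperator ⇑(T' - 1) := by
    have e : T' - 1 = p - (1 - T) := by rw [hT']; abel
    rw [e, ContinuousLinearMap.coe_sub']
    exact hp_cpt.sub hF
  have hS1cpt : IsCompactOperator ⇑(S - 1) := by
    rw [e_S1]
    have e : ⇑(cfc g T' * (T' - 1)) = ⇑(cfc g T') ∘ ⇑(T' - 1) := rfl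
    rw [e]
    exact hT'1.continuous_comp (cfc g T').continuous
  -- the perturbation
  set K : H →L[ℂ] H := F * (S - 1) with hK
  have hKc : IsCompactOperator ⇑K := by
    have e : ⇑K = ⇑F ∘ ⇑(S - 1) := rfl
    rw [e]
    exact hS1cpt.continuous_comp F.continuous
  have hFK : F + K = F * S := by rw [hK, mul_sub, mul_one]; abel
  have hadj : adjoint (F * S) = S * adjoint F := by
    rw [← star_eq_adjoint, star_mul, hS_sa.star_eq, star_eq_adjoint]
  have hmain : (1 : H →L[ℂ] H) - adjoint (F + K) * (F + K) = S * p * S := by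
    rw [hFK, hadj]
    have h1 : (S * adjoint F) * (F * S) = S * T * S := by rw [hT]; noncomm_ring
    have h2 : S * T * S = 1 - S * p * S := by
      have e2 : T = T' - p := by rw [hT']; abel
      rw [e2]
      calc S * (T' - p) * S = S * T' * S - S * p * S := by noncomm_ring
        _ = 1 - S * p * S := by rw [hSTS]
    rw [h1, h2, sub_sub_cancel]
  have hproj : (S * p * S) * (S * p * S) = S * p * S := by
    calc (S*p*S)*(S*p*S) = S * ((p * (S*S)) * (p * S)) := by noncomm_ring
      _ = S * (p * (p * S)) := by rw [hpSS]
      _ = S * (p*p) * S := by noncomm_ring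
      _ = S*p*S := by rw [hpp]
  have hsa2 : IsSelfAdjoint (S * p * S) := by
    rw [IsSelfAdjoint, star_mul, star_mul, hS_sa.star_eq, hp_sa.star_eq, ← mul_assoc]
  have hfin : FiniteDimensional ℂ (LinearMap.range ((S * p * S : H →L[ℂ] H) : H →ₗ[ℂ] H)) := by
    have hle : LinearMap.range ((S * p * S : H →L[ℂ] H) : H →ₗ[ℂ] H) ≤ N.map (S : H →ₗ[ℂ] H) := by
      rintro _ ⟨x, rfl⟩
      exact ⟨p (S x), hpmem _, rfl⟩
    exact Submodule.finiteDimensional_of_le hle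
  refine ⟨K, hKc, ?_, ?_, ?_⟩
  · rw [hmain]; exact hproj
  · rw [hmain]; exact hsa2
  · rw [hmain]; exact hfin

end
end

section
/- Let Y, Z be compact Hausdorff spaces, f : Z → Y continuous, and ξ, ζ Hermitian vector bundles over Y, Z. There is a bijection between the set of maps Δ : Γ(ξ) → Γ(ζ) satisfying ⟨Δ(s), Δ(s')⟩ = ⟨s, s'⟩ ∘ f for all sections s, s', and the set of continuous fiberwise isometric bundle maps f*(ξ) → ζ over Z. -/
open scoped InnerProductSpace

/-- A Hermitian vector bundle over `Y`, presented (Serre–Swan style) as the image of a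
continuous family of orthogonal projections `P : Y → Mₘ(ℂ)`. -/
def IsProjField {Y : Type*} [TopologicalSpace Y] {m : ℕ}
    (P : Y → Matrix (Fin m) (Fin m) ℂ) : Prop :=
  Continuous P ∧ ∀ y, P y * P y = P y ∧ star (P y) = P y

/-- The Hilbert `C(Y)`-module of continuous sections of the bundle determined by `P`. -/
def Sections {Y : Type*} [TopologicalSpace Y] {m : ℕ}
    (P : Y → Matrix (Fin m) (Fin m) ℂ) : Type _ :=
  {s : Y → EuclideanSpace ℂ (Fin m) //
    Continuous s ∧ ∀ y, Matrix.toEuclideanLin (P y) (s y) = s y}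

/-- `D` is a continuous fiberwise isometric bundle map `f*(ξ_P) → ζ_Q` over `Z`. -/
def IsFiberwiseIsometry {Y Z : Type*} [TopologicalSpace Y] [TopologicalSpace Z]
    (f : Z → Y) {m n : ℕ} (P : Y → Matrix (Fin m) (Fin m) ℂ)
    (Q : Z → Matrix (Fin n) (Fin n) ℂ) (D : Z → Matrix (Fin n) (Fin m) ℂ) : Prop :=
  Continuous D ∧ (∀ z, Q z * D z * P (f z) = D z) ∧
    ∀ (z : Z) (v v' : EuclideanSpace ℂ (Fin m)),
      Matrix.toEuclideanLin (P (f z)) v = v → Matrix.toEuclideanLin (P (f z)) v' = v' →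
      ⟪Matrix.toEuclideanLin (D z) v, Matrix.toEuclideanLin (D z) v'⟫_ℂ = ⟪v, v'⟫_ℂ

/-- `Δ : Γ(ξ_P) → Γ(ζ_Q)` is a Hilbert C*-module morphism over `α ↦ α ∘ f`. -/
def IsModuleMorphism {Y Z : Type*} [TopologicalSpace Y] [TopologicalSpace Z]
    (f : Z → Y) {m n : ℕ} (P : Y → Matrix (Fin m) (Fin m) ℂ)
    (Q : Z → Matrix (Fin n) (Fin n) ℂ) (Δ : Sections P → Sections Q) : Prop :=
  ∀ (s s' : Sections P) (z : Z),
    ⟪(Δ s).1 z, (Δ s').1 z⟫_ℂ = ⟪s.1 (f z), s'.1 (f z)⟫_ℂ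

lemma toEucl_mul {a b c : ℕ} (A : Matrix (Fin a) (Fin b) ℂ) (B : Matrix (Fin b) (Fin c) ℂ)
    (v : EuclideanSpace ℂ (Fin c)) :
    Matrix.toEuclideanLin (A * B) v = Matrix.toEuclideanLin A (Matrix.toEuclideanLin B v) := by
  simp [Matrix.toEuclideanLin_apply, Matrix.mulVec_mulVec]

lemma cont_apply {X : Type*} [TopologicalSpace X] {a b : ℕ} {M : X → Matrix (Fin a) (Fin b) ℂ}
    {v : X → EuclideanSpace ℂ (Fin b)} (hM : Continuous M) (hv : Continuous v) :
    Continuous fun x => Matrix.toEuclideanLin (M x) (v x) := by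
  simp only [Matrix.toEuclideanLin_apply]
  refine (PiLp.continuous_toLp _ _).comp ?_
  refine continuous_pi fun i => ?_
  simp only [Matrix.mulVec, dotProduct]
  exact continuous_finset_sum _ fun j _ =>
    ((continuous_apply_apply i j).comp hM).mul
      ((continuous_apply j).comp ((PiLp.continuous_ofLp _ _).comp hv))

lemma key {E E' : Type*} [NormedAddCommGroup E] [InnerProductSpace ℂ E]
    [NormedAddCommGroup E'] [InnerProductSpace ℂ E'] {ι : Type*} [Fintype ι]
    (a : E) (b : ι → E) (a' : E') (b' : ι → E') (c : ι → ℂ)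
    (haa : ⟪a', a'⟫_ℂ = ⟪a, a⟫_ℂ) (hab : ∀ j, ⟪a', b' j⟫_ℂ = ⟪a, b j⟫_ℂ)
    (hba : ∀ j, ⟪b' j, a'⟫_ℂ = ⟪b j, a⟫_ℂ) (hbb : ∀ j k, ⟪b' j, b' k⟫_ℂ = ⟪b j, b k⟫_ℂ)
    (h : a = ∑ j, c j • b j) : a' = ∑ j, c j • b' j := by
  have h0 : ⟪a' - ∑ j, c j • b' j, a' - ∑ j, c j • b' j⟫_ℂ
      = ⟪a - ∑ j, c j • b j, a - ∑ j, c j • b j⟫_ℂ := by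
    simp only [inner_sub_sub_self, inner_sum, sum_inner, inner_smul_right, inner_smul_left,
      haa, hab, hba, hbb]
  rw [← h, sub_self, inner_zero_left, inner_self_eq_zero, sub_eq_zero] at h0
  exact h0

lemma basis_expand {m : ℕ} (w : EuclideanSpace ℂ (Fin m)) :
    w = ∑ j, w j • EuclideanSpace.single j (1 : ℂ) := by
  have := (EuclideanSpace.basisFun (Fin m) ℂ).sum_repr w
  simpa [EuclideanSpace.basisFun_apply, EuclideanSpace.basisFun_repr] using this.symm

noncomputable def secP {Y : Type*} [TopologicalSpace Y] {m : ℕ} {P : Y → Matrix (Fin m) (Fin m) ℂ}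
    (hP : IsProjField P) (v : EuclideanSpace ℂ (Fin m)) : Sections P :=
  ⟨fun y => Matrix.toEuclideanLin (P y) v, cont_apply hP.1 continuous_const, fun y => by
    rw [← toEucl_mul, (hP.2 y).1]⟩

example {m : ℕ} {n : ℕ} (D : Matrix (Fin n) (Fin m) ℂ) (j : Fin m) :
    Matrix.toEuclideanLin D (EuclideanSpace.single j (1 : ℂ))
      = (WithLp.equiv 2 (Fin n → ℂ)).symm (fun i => D i j) := by
  simp only [Matrix.toEuclideanLin_apply, EuclideanSpace.ofLp_single, Matrix.mulVec_single, mul_one,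
    WithLp.equiv_symm_apply, MulOpposite.op_one, one_smul]
  rfl

section Part2
variable {Y Z : Type*} [TopologicalSpace Y] [TopologicalSpace Z]
    (f : Z → Y) {m n : ℕ}
    {P : Y → Matrix (Fin m) (Fin m) ℂ} (hP : IsProjField P)
    {Q : Z → Matrix (Fin n) (Fin n) ℂ} (hQ : IsProjField Q)
    {Δ : Sections P → Sections Q}

/-- `Δ s z` depends only on `s (f z)`. -/
lemma L0 (hΔ : ∀ (s s' : Sections P) (z : Z),
      ⟪(Δ s).1 z, (Δ s').1 z⟫_ℂ = ⟪s.1 (f z), s'.1 (f z)⟫_ℂ) (s s' : Sections P) (z : Z) (h : s.1 (f z) = s'.1 (f z)) :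
    (Δ s).1 z = (Δ s').1 z := by
  have := key (ι := Unit) (s.1 (f z)) (fun _ => s'.1 (f z)) ((Δ s).1 z) (fun _ => (Δ s').1 z)
    (fun _ => 1) (hΔ s s z) (fun _ => hΔ s s' z) (fun _ => hΔ s' s z)
    (fun _ _ => hΔ s' s' z) (by simp [h])
  simpa using this

variable (Δ) in
noncomputable def Dmat : Z → Matrix (Fin n) (Fin m) ℂ := fun z =>
  Matrix.of fun i j => (Δ (secP hP (EuclideanSpace.single j 1))).1 z i

lemma colsum (z : Z) (w : EuclideanSpace ℂ (Fin m)) :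
    Matrix.toEuclideanLin (Dmat hP Δ z) w
      = ∑ j, w j • (Δ (secP hP (EuclideanSpace.single j 1))).1 z := by
  conv_lhs => rw [basis_expand w, map_sum]
  refine Finset.sum_congr rfl fun j _ => ?_
  rw [map_smul]
  congr 1
  have : Matrix.toEuclideanLin (Dmat hP Δ z) (EuclideanSpace.single j (1:ℂ))
      = (WithLp.equiv 2 (Fin n → ℂ)).symm (fun i => Dmat hP Δ z i j) := by
    simp only [Matrix.toEuclideanLin_apply, EuclideanSpace.ofLp_single, Matrix.mulVec_single, mul_one,
    WithLp.equiv_symm_apply, MulOpposite.op_one, one_smul]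
    rfl
  rw [this]
  rfl

lemma master (hΔ : ∀ (s s' : Sections P) (z : Z),
      ⟪(Δ s).1 z, (Δ s').1 z⟫_ℂ = ⟪s.1 (f z), s'.1 (f z)⟫_ℂ) (z : Z) (w : EuclideanSpace ℂ (Fin m)) :
    (Δ (secP hP w)).1 z = Matrix.toEuclideanLin (Dmat hP Δ z) w := by
  rw [colsum]
  refine key (ι := Fin m) ((secP hP w).1 (f z))
    (fun j => (secP hP (EuclideanSpace.single j 1)).1 (f z)) _ _ (fun j => w j)
    (hΔ _ _ z) (fun j => hΔ _ _ z) (fun j => hΔ _ _ z) (fun j k => hΔ _ _ z) ?_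
  show Matrix.toEuclideanLin (P (f z)) w
    = ∑ j, w j • Matrix.toEuclideanLin (P (f z)) (EuclideanSpace.single j 1)
  simp_rw [← map_smul, ← map_sum, ← basis_expand]

end Part2

/-- Hilbert C*-module morphisms `Γ(ξ) → Γ(ζ)` over `α ↦ α ∘ f` are in one-to-one
correspondence with continuous fiberwise isometric bundle maps `f*(ξ) → ζ`: the relation
`Δ(s)(z) = D(z)(s(f z))` is the graph of a bijection between the two sets. -/
theorem moduleMorphism_bijects_with_fiberwiseIsometry
    {Y Z : Type*} [TopologicalSpace Y] [CompactSpace Y] [T2Space Y]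
    [TopologicalSpace Z] [CompactSpace Z] [T2Space Z]
    (f : Z → Y) (hf : Continuous f) {m n : ℕ}
    (P : Y → Matrix (Fin m) (Fin m) ℂ) (hP : IsProjField P)
    (Q : Z → Matrix (Fin n) (Fin n) ℂ) (hQ : IsProjField Q) :
    (∀ D : Z → Matrix (Fin n) (Fin m) ℂ, IsFiberwiseIsometry f P Q D →
      ∃! Δ : Sections P → Sections Q, IsModuleMorphism f P Q Δ ∧
        ∀ (s : Sections P) (z : Z),
          (Δ s).1 z = Matrix.toEuclideanLin (D z) (s.1 (f z))) ∧
    (∀ Δ : Sections P → Sections Q, IsModuleMorphism f P Q Δ →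
      ∃! D : Z → Matrix (Fin n) (Fin m) ℂ, IsFiberwiseIsometry f P Q D ∧
        ∀ (s : Sections P) (z : Z),
          (Δ s).1 z = Matrix.toEuclideanLin (D z) (s.1 (f z))) := by
  constructor
  · -- D ↦ Δ
    rintro D ⟨hDc, hQDP, hiso⟩
    refine ⟨fun s => ⟨fun z => Matrix.toEuclideanLin (D z) (s.1 (f z)),
      cont_apply hDc (s.2.1.comp hf), fun z => ?_⟩,
      ⟨fun s s' z => hiso z _ _ (s.2.2 (f z)) (s'.2.2 (f z)), fun s z => rfl⟩, ?_⟩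
    · calc Matrix.toEuclideanLin (Q z) (Matrix.toEuclideanLin (D z) (s.1 (f z)))
          = Matrix.toEuclideanLin (Q z)
              (Matrix.toEuclideanLin (D z) (Matrix.toEuclideanLin (P (f z)) (s.1 (f z)))) := by
            rw [s.2.2]
        _ = Matrix.toEuclideanLin (Q z * D z * P (f z)) (s.1 (f z)) := by
            rw [Matrix.mul_assoc, toEucl_mul, toEucl_mul]
        _ = Matrix.toEuclideanLin (D z) (s.1 (f z)) := by rw [hQDP z]
    · rintro Δ' ⟨-, hform⟩
      funext s
      exact Subtype.ext (funext fun z => hform s z)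
  · -- Δ ↦ D
    intro Δ hΔ
    have hΔ' : ∀ (s s' : Sections P) (z : Z),
        ⟪(Δ s).1 z, (Δ s').1 z⟫_ℂ = ⟪s.1 (f z), s'.1 (f z)⟫_ℂ := hΔ
    have hDP : ∀ (z : Z) (w : EuclideanSpace ℂ (Fin m)),
        Matrix.toEuclideanLin (Dmat hP Δ z) (Matrix.toEuclideanLin (P (f z)) w)
          = Matrix.toEuclideanLin (Dmat hP Δ z) w := by
      intro z w
      rw [← master f hP hΔ' z, ← master f hP hΔ' z]
      refine L0 f hΔ' _ _ z ?_
      show Matrix.toEuclideanLin (P (f z)) (Matrix.toEuclideanLin (P (f z)) w)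
        = Matrix.toEuclideanLin (P (f z)) w
      rw [← toEucl_mul, (hP.2 (f z)).1]
    have hQD : ∀ (z : Z) (w : EuclideanSpace ℂ (Fin m)),
        Matrix.toEuclideanLin (Q z) (Matrix.toEuclideanLin (Dmat hP Δ z) w)
          = Matrix.toEuclideanLin (Dmat hP Δ z) w := by
      intro z w
      rw [← master f hP hΔ' z]
      exact (Δ (secP hP w)).2.2 z
    have hform : ∀ (s : Sections P) (z : Z),
        (Δ s).1 z = Matrix.toEuclideanLin (Dmat hP Δ z) (s.1 (f z)) := by
      intro s z
      rw [← master f hP hΔ' z]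
      refine L0 f hΔ' _ _ z ?_
      exact (s.2.2 (f z)).symm
    refine ⟨Dmat hP Δ, ⟨⟨?_, fun z => ?_, fun z v v' hv hv' => ?_⟩, hform⟩, ?_⟩
    · -- continuity
      refine continuous_matrix fun i j => ?_
      exact (continuous_apply i).comp
        ((PiLp.continuous_ofLp 2 _).comp (Δ (secP hP (EuclideanSpace.single j 1))).2.1)
    · -- Q D P = D
      apply Matrix.toEuclideanLin.injective
      apply LinearMap.ext
      intro w
      show Matrix.toEuclideanLin (Q z * Dmat hP Δ z * P (f z)) w = _
      rw [Matrix.mul_assoc, toEucl_mul, toEucl_mul, hDP, hQD]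
    · -- isometry
      rw [← master f hP hΔ' z v, ← master f hP hΔ' z v', hΔ']
      show ⟪Matrix.toEuclideanLin (P (f z)) v, Matrix.toEuclideanLin (P (f z)) v'⟫_ℂ = _
      rw [hv, hv']
    · -- uniqueness
      rintro D' ⟨⟨hD'c, hQD'P, hiso'⟩, hform'⟩
      funext z
      apply Matrix.toEuclideanLin.injective
      apply LinearMap.ext
      intro w
      have h1 : Matrix.toEuclideanLin (D' z) (Matrix.toEuclideanLin (P (f z)) w)
          = (Δ (secP hP w)).1 z := (hform' (secP hP w) z).symm
      calc Matrix.toEuclideanLin (D' z) w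
          = Matrix.toEuclideanLin (Q z * D' z * P (f z)) w := by rw [hQD'P]
        _ = Matrix.toEuclideanLin (Q z)
              (Matrix.toEuclideanLin (D' z) (Matrix.toEuclideanLin (P (f z)) w)) := by
            rw [Matrix.mul_assoc, toEucl_mul, toEucl_mul]
        _ = Matrix.toEuclideanLin (Q z) ((Δ (secP hP w)).1 z) := by rw [h1]
        _ = (Δ (secP hP w)).1 z := (Δ (secP hP w)).2.2 z
        _ = Matrix.toEuclideanLin (Dmat hP Δ z) w := master f hP hΔ' z w
end

section
/- Let U be the open unit disc in ℂ and let ω_k, ω_l : S¹ → S¹ be continuous maps of winding numbers k ≠ l. Then the composites of ω_k and ω_l with the canonical map βU∖U → S¹ (dual to the inclusion C(S¹) → C_b(U)/C₀(U)) are not homotopic as maps βU∖U → S¹; equivalently, the group homomorphism ℤ ≅ [S¹, S¹] → [βU∖U, S¹] induced by this map is injective. -/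
/-- The corona `βU ∖ U` of the open unit disc `U`. -/
abbrev DiscCorona : Type :=
  {x : StoneCech {z : ℂ // ‖z‖ < 1} // x ∉ Set.range stoneCechUnit}

/-- An element of the circle group from a complex number of norm one. -/
def mkCircle (z : ℂ) (h : ‖z‖ = 1) : Circle :=
  ⟨z, mem_sphere_zero_iff_norm.2 h⟩

lemma continuous_mkCircle {X : Type*} [TopologicalSpace X] {g : X → ℂ}
    (hg : Continuous g) (h : ∀ x, ‖g x‖ = 1) :
    Continuous fun x => mkCircle (g x) (h x) :=
  Continuous.subtype_mk hg _

section Aux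

open Complex

lemma circle_slit {w : Circle} (hw : (w : ℂ) ≠ -1) : (w : ℂ) ∈ Complex.slitPlane := by
  rw [Complex.mem_slitPlane_iff]
  by_contra hc
  push_neg at hc
  obtain ⟨h1, h2⟩ := hc
  have habs : ‖(w : ℂ)‖ = 1 := Circle.norm_coe w
  have hre : (w : ℂ) = ((w : ℂ).re : ℂ) := by
    apply Complex.ext <;> simp [h2]
  rw [hre, Complex.norm_real, Real.norm_eq_abs] at habs
  have : (w : ℂ).re = -1 := by
    rcases abs_cases ((w : ℂ).re) with ⟨h, _⟩ | ⟨h, _⟩ <;> linarith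
  exact hw (by rw [hre, this]; norm_num)

lemma exp_arg_circle (w : Circle) : Complex.exp ((Complex.arg w) * Complex.I) = (w : ℂ) := by
  have := Complex.norm_mul_exp_arg_mul_I (w : ℂ)
  rwa [Circle.norm_coe, Complex.ofReal_one, one_mul] at this

lemma winding_ivt (ψ : ℝ → ℝ) (hc : Continuous ψ)
    (h1 : ∀ t ∈ Set.Icc (0:ℝ) 1, Complex.exp (ψ t * Complex.I) ≠ -1)
    (h2 : 2 * Real.pi ≤ ψ 0 - ψ 1) : False := by
  have hπ := Real.pi_pos
  set n : ℤ := ⌈(ψ 1 - Real.pi) / (2 * Real.pi)⌉ with hn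
  set c : ℝ := Real.pi + 2 * Real.pi * n with hcdef
  have hc1 : ψ 1 ≤ c := by
    have := Int.le_ceil ((ψ 1 - Real.pi) / (2 * Real.pi))
    rw [div_le_iff₀ (by linarith)] at this
    rw [hcdef]; nlinarith
  have hc0 : c ≤ ψ 0 := by
    have h3 : ((n : ℝ)) < (ψ 1 - Real.pi) / (2 * Real.pi) + 1 :=
      Int.ceil_lt_add_one ((ψ 1 - Real.pi) / (2 * Real.pi))
    have h4 : ((n : ℝ) - 1) * (2 * Real.pi) < ψ 1 - Real.pi := by
      rw [← lt_div_iff₀ (by linarith)]; linarith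
    rw [hcdef]; nlinarith
  have hmem : c ∈ Set.uIcc (ψ 0) (ψ 1) := by
    rw [Set.uIcc_of_ge (by linarith)]
    exact ⟨hc1, hc0⟩
  obtain ⟨t, ht, hψt⟩ := intermediate_value_uIcc (hc.continuousOn) hmem
  rw [Set.uIcc_of_le (by norm_num)] at ht
  apply h1 t ht
  rw [hψt, hcdef]
  push_cast
  rw [add_mul, Complex.exp_add, Complex.exp_pi_mul_I]
  have h5 : ((2:ℂ) * Real.pi * n * Complex.I) = (n : ℂ) * (2 * Real.pi * Complex.I) := by ring
  rw [h5, Complex.exp_int_mul_two_pi_mul_I]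
  ring

lemma exists_log {X : Type*} [TopologicalSpace X] [CompactSpace X] {f g : C(X, Circle)}
    (H : ContinuousMap.Homotopy f g) :
    ∃ L : X → ℝ, Continuous L ∧ ∀ x, Complex.exp (L x * Complex.I) = (g x : ℂ) / (f x : ℂ) := by
  classical
  set F : ℝ → X → Circle := fun t x => H (Set.projIcc 0 1 zero_le_one t, x) with hFdef
  have hFjoint : Continuous fun p : ℝ × X => F p.1 p.2 := by
    exact H.continuous.comp
      (((continuous_projIcc).comp continuous_fst).prodMk continuous_snd)
  have hFt : ∀ t, Continuous fun x => F t x := fun t =>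
    hFjoint.comp (continuous_const.prodMk continuous_id)
  -- the uniform gap
  obtain ⟨δ, hδpos, hδ⟩ : ∃ δ > 0, ∀ (s t : ℝ), |s - t| ≤ δ → ∀ x, (F s x : ℂ) ≠ -(F t x) := by
    set S : Set ((Set.Icc (0:ℝ) 1 × Set.Icc (0:ℝ) 1) × X) :=
      {p | (F p.1.1 p.2 : ℂ) = -(F p.1.2 p.2)} with hS
    have hSc : IsClosed S := by
      apply isClosed_eq
      · exact continuous_subtype_val.comp <|
          hFjoint.comp ((continuous_subtype_val.comp (continuous_fst.comp continuous_fst)).prodMk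
            continuous_snd)
      · exact (continuous_subtype_val.comp <|
          hFjoint.comp ((continuous_subtype_val.comp (continuous_snd.comp continuous_fst)).prodMk
            continuous_snd)).neg
    have key : ∀ δ', (0 < δ') → (∀ p ∈ S, δ' ≤ |(p.1.1 : ℝ) - (p.1.2 : ℝ)|) →
        ∀ (s t : ℝ), |s - t| ≤ δ'/2 → ∀ x, (F s x : ℂ) ≠ -(F t x) := by
      intro δ' hδ' hbound s t hst x heq
      have hproj : |((Set.projIcc (0:ℝ) 1 zero_le_one s : Set.Icc (0:ℝ) 1) : ℝ) -
          ((Set.projIcc (0:ℝ) 1 zero_le_one t : Set.Icc (0:ℝ) 1) : ℝ)| ≤ |s - t| := by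
        have hlip := (LipschitzWith.projIcc (zero_le_one' ℝ)).dist_le_mul s t
        rw [Subtype.dist_eq] at hlip
        simpa [Real.dist_eq] using hlip
      have hmem : ((Set.projIcc (0:ℝ) 1 zero_le_one s, Set.projIcc (0:ℝ) 1 zero_le_one t), x) ∈ S := by
        have h1 : F s x = F ((Set.projIcc (0:ℝ) 1 zero_le_one s : Set.Icc (0:ℝ) 1) : ℝ) x := by
          simp only [hFdef, Set.projIcc_val]
        have h2 : F t x = F ((Set.projIcc (0:ℝ) 1 zero_le_one t : Set.Icc (0:ℝ) 1) : ℝ) x := by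
          simp only [hFdef, Set.projIcc_val]
        rw [h1, h2] at heq
        exact heq
      have := hbound _ hmem
      simp only at this
      have : δ' ≤ δ'/2 := le_trans this (le_trans hproj hst)
      linarith
    by_cases hne : S.Nonempty
    · obtain ⟨p₀, hp₀, hmin'⟩ := (hSc.isCompact).exists_isMinOn hne
        (by fun_prop : Continuous fun p : (Set.Icc (0:ℝ) 1 × Set.Icc (0:ℝ) 1) × X =>
          |(p.1.1 : ℝ) - (p.1.2 : ℝ)|).continuousOn
      have hmin := isMinOn_iff.mp hmin'
      set δ₀ := |(p₀.1.1 : ℝ) - (p₀.1.2 : ℝ)| with hδ₀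
      have hδ₀pos : 0 < δ₀ := by
        rcases eq_or_lt_of_le (abs_nonneg ((p₀.1.1 : ℝ) - (p₀.1.2 : ℝ))) with hz | hp
        · exfalso
          have heq : (p₀.1.1 : ℝ) = (p₀.1.2 : ℝ) := by
            have := abs_eq_zero.mp hz.symm; linarith
          have hFeq : F (p₀.1.1 : ℝ) p₀.2 = F (p₀.1.2 : ℝ) p₀.2 := by rw [heq]
          have := hp₀
          rw [hS] at this
          simp only [Set.mem_setOf_eq] at this
          rw [hFeq] at this
          have hne0 : ((F (p₀.1.2 : ℝ) p₀.2 : Circle) : ℂ) ≠ 0 := Circle.coe_ne_zero _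
          apply hne0
          have h2 : (2 : ℂ) * (F (p₀.1.2 : ℝ) p₀.2 : ℂ) = 0 := by rw [two_mul]; linear_combination this
          simpa using h2
        · exact hp
      exact ⟨δ₀/2, by linarith, key δ₀ hδ₀pos (fun p hp => hmin p hp) ⟩
    · refine ⟨1, one_pos, ?_⟩
      intro s t hst x heq
      apply hne
      refine ⟨((Set.projIcc (0:ℝ) 1 zero_le_one s, Set.projIcc (0:ℝ) 1 zero_le_one t), x), ?_⟩
      have h1 : F s x = F ((Set.projIcc (0:ℝ) 1 zero_le_one s : Set.Icc (0:ℝ) 1) : ℝ) x := by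
        simp only [hFdef, Set.projIcc_val]
      have h2 : F t x = F ((Set.projIcc (0:ℝ) 1 zero_le_one t : Set.Icc (0:ℝ) 1) : ℝ) x := by
        simp only [hFdef, Set.projIcc_val]
      rw [h1, h2] at heq
      exact heq
  -- choose the number of subdivisions
  set n : ℕ := max 1 ⌈1/δ⌉₊ with hndef
  have hn1 : 1 ≤ n := le_max_left _ _
  have hn0 : (0:ℝ) < n := by positivity
  have hinv : (1:ℝ)/n ≤ δ := by
    rw [div_le_iff₀ hn0]
    have h1 : (1:ℝ)/δ ≤ ⌈1/δ⌉₊ := Nat.le_ceil _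
    have h2 : ((⌈1/δ⌉₊ : ℝ)) ≤ n := by exact_mod_cast Nat.cast_le.mpr (le_max_right _ _)
    have := le_trans h1 h2
    rw [div_le_iff₀ hδpos] at this
    linarith
  -- the ratios are circle elements avoiding -1
  have hne1 : ∀ (j : ℕ) (x : X),
      ((F (((j:ℝ)+1)/n) x / F ((j:ℝ)/n) x : Circle) : ℂ) ≠ -1 := by
    intro j x hc
    rw [Circle.coe_div] at hc
    have hb : ((F ((j:ℝ)/n) x : Circle) : ℂ) ≠ 0 := Circle.coe_ne_zero _
    rw [div_eq_iff hb] at hc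
    have hdist : |(((j:ℝ)+1)/n) - ((j:ℝ)/n)| ≤ δ := by
      have : (((j:ℝ)+1)/n) - ((j:ℝ)/n) = 1/n := by field_simp; ring
      rw [this, abs_of_pos (by positivity)]
      exact hinv
    exact hδ _ _ hdist x (by rw [hc]; ring)
  refine ⟨fun x => ∑ j ∈ Finset.range n,
      Complex.arg ((F (((j:ℝ)+1)/n) x / F ((j:ℝ)/n) x : Circle) : ℂ), ?_, ?_⟩
  · apply continuous_finset_sum
    intro j _
    have hq : Continuous fun x => ((F (((j:ℝ)+1)/n) x / F ((j:ℝ)/n) x : Circle) : ℂ) :=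
      continuous_subtype_val.comp ((hFt _).div' (hFt _))
    rw [continuous_iff_continuousAt]
    intro x
    exact ContinuousAt.comp (f := fun x => ((F (((j:ℝ)+1)/n) x / F ((j:ℝ)/n) x : Circle) : ℂ))
      (Complex.continuousAt_arg (circle_slit (hne1 j x))) hq.continuousAt
  · intro x
    set u : ℕ → Circle := fun j => F ((j:ℝ)/n) x with hu
    have hcast : ∀ j : ℕ, F (((j:ℝ)+1)/n) x = u (j+1) := by
      intro j; rw [hu]; push_cast; ring_nf
    calc Complex.exp ((∑ j ∈ Finset.range n,
          Complex.arg ((F (((j:ℝ)+1)/n) x / F ((j:ℝ)/n) x : Circle) : ℂ)) * Complex.I)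
        = ∏ j ∈ Finset.range n,
            Complex.exp (Complex.arg ((F (((j:ℝ)+1)/n) x / F ((j:ℝ)/n) x : Circle) : ℂ) * Complex.I) := by
          rw [Complex.ofReal_sum, Finset.sum_mul, Complex.exp_sum]
      _ = ∏ j ∈ Finset.range n, ((u (j+1) / u j : Circle) : ℂ) := by
          refine Finset.prod_congr rfl fun j _ => ?_
          rw [exp_arg_circle, hcast j]
      _ = ((∏ j ∈ Finset.range n, (u (j+1) / u j) : Circle) : ℂ) := by
          exact (map_prod Circle.coeHom (fun j => u (j+1) / u j) (Finset.range n)).symm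
      _ = ((u n / u 0 : Circle) : ℂ) := by rw [Finset.prod_range_div]
      _ = (g x : ℂ) / (f x : ℂ) := by
          have hun : u n = g x := by
            rw [hu]
            have h1 : ((n:ℝ)/n) = (1:ℝ) := div_self (ne_of_gt hn0)
            simp only [h1, hFdef]
            rw [Set.projIcc_right]
            exact H.apply_one x
          have hu0 : u 0 = f x := by
            rw [hu]
            simp only [Nat.cast_zero, zero_div, hFdef]
            rw [Set.projIcc_left]
            exact H.apply_zero x
          rw [hun, hu0, Circle.coe_div]

theorem main_aux
    (e : StoneCech {z : ℂ // ‖z‖ < 1} → ℂ)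
    (he_cont : Continuous e)
    (he_unit : ∀ u : {z : ℂ // ‖z‖ < 1}, e (stoneCechUnit u) = u.1)
    (he_corona : ∀ x : StoneCech {z : ℂ // ‖z‖ < 1},
      x ∉ Set.range stoneCechUnit → ‖e x‖ = 1)
    (k l : ℤ) (hkl : k < l)
    (h : ContinuousMap.Homotopic
      (⟨fun x : DiscCorona => (mkCircle (e x.1) (he_corona x.1 x.2)) ^ k,
        (continuous_zpow k).comp
          (continuous_mkCircle (he_cont.comp continuous_subtype_val) _)⟩)
      (⟨fun x : DiscCorona => (mkCircle (e x.1) (he_corona x.1 x.2)) ^ l,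
        (continuous_zpow l).comp
          (continuous_mkCircle (he_cont.comp continuous_subtype_val) _)⟩)) :
    False := by
  obtain ⟨H⟩ := h
  set m : ℕ := (l - k).toNat with hmdef
  have hmZ : (m : ℤ) = l - k := Int.toNat_of_nonneg (by omega)
  have hm1 : 1 ≤ m := by omega
  -- the range of `stoneCechUnit` is open
  have hrange : Set.range (stoneCechUnit : {z : ℂ // ‖z‖ < 1} → StoneCech _)
      = e ⁻¹' {z : ℂ | ‖z‖ < 1} := by
    ext x
    constructor
    · rintro ⟨u, rfl⟩
      simp only [Set.mem_preimage, Set.mem_setOf_eq, he_unit u]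
      exact u.2
    · intro hx
      by_contra hnx
      have := he_corona x hnx
      simp only [Set.mem_preimage, Set.mem_setOf_eq] at hx
      rw [this] at hx
      exact absurd hx (lt_irrefl 1)
  have hopen : IsOpen (Set.range (stoneCechUnit : {z : ℂ // ‖z‖ < 1} → StoneCech _)) := by
    rw [hrange]
    exact (isOpen_lt continuous_norm continuous_const).preimage he_cont
  have hclosed : IsClosed {x : StoneCech {z : ℂ // ‖z‖ < 1} | x ∉ Set.range stoneCechUnit} :=
    hopen.isClosed_compl
  haveI : CompactSpace DiscCorona :=
    isCompact_iff_compactSpace.mp hclosed.isCompact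
  -- continuous logarithm on the corona
  obtain ⟨L, hLc, hL⟩ := exists_log H
  have hL' : ∀ x : DiscCorona, Complex.exp (L x * Complex.I) = (e x.1) ^ m := by
    intro x
    rw [hL x]
    set c : Circle := mkCircle (e x.1) (he_corona x.1 x.2) with hc
    have h1 : ((c ^ l : Circle) : ℂ) / ((c ^ k : Circle) : ℂ) = ((c ^ l / c ^ k : Circle) : ℂ) := by
      rw [Circle.coe_div]
    show ((c ^ l : Circle) : ℂ) / ((c ^ k : Circle) : ℂ) = _
    have h2 : c ^ l / c ^ k = c ^ (m : ℤ) := by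
      rw [hmZ, div_eq_mul_inv, ← zpow_neg, ← zpow_add, sub_eq_add_neg]
    rw [h1, h2, zpow_natCast]
    show ((c ^ m : Circle) : ℂ) = (e x.1) ^ m
    rw [Circle.coe_pow]
    rfl
  -- Tietze extension
  obtain ⟨G, hG⟩ := ContinuousMap.exists_extension'
    (hclosed.isClosedEmbedding_subtypeVal) (⟨L, hLc⟩ : C(DiscCorona, ℝ))
  -- the open set V
  set P : StoneCech {z : ℂ // ‖z‖ < 1} → ℂ :=
    fun x => Complex.exp (G x * Complex.I) * (‖e x‖ : ℂ) ^ m + (e x) ^ m with hPdef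
  have hPc : Continuous P := by
    apply Continuous.add
    · apply Continuous.mul
      · exact Complex.continuous_exp.comp
          ((Complex.continuous_ofReal.comp G.continuous).mul continuous_const)
      · exact (Complex.continuous_ofReal.comp (continuous_norm.comp he_cont)).pow m
    · exact he_cont.pow m
  have hVopen : IsOpen {x | P x ≠ 0} := isOpen_compl_iff.mpr (isClosed_eq hPc continuous_const)
  have hcorV : ∀ x (hx : x ∉ Set.range stoneCechUnit), P x ≠ 0 := by
    intro x hx
    have hGx : G x = L ⟨x, hx⟩ := congrFun hG ⟨x, hx⟩
    have hnorm : ‖e x‖ = 1 := he_corona x hx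
    have hPx : P x = 2 * (e x) ^ m := by
      rw [hPdef]
      simp only
      rw [hGx, hL' ⟨x, hx⟩, hnorm]
      push_cast
      ring
    rw [hPx]
    have hene : e x ≠ 0 := by
      intro h0; rw [h0] at hnorm; simp at hnorm
    exact mul_ne_zero two_ne_zero (pow_ne_zero _ hene)
  -- find a good radius
  obtain ⟨r', hr'0, hr'1, hr'V⟩ : ∃ r' : ℝ, 0 < r' ∧ r' < 1 ∧
      ∀ x : StoneCech {z : ℂ // ‖z‖ < 1}, ‖e x‖ = r' → P x ≠ 0 := by
    set C : Set (StoneCech {z : ℂ // ‖z‖ < 1}) := {x | P x = 0} with hCdef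
    by_cases hC : C.Nonempty
    · have hCcl : IsClosed C := isClosed_eq hPc continuous_const
      obtain ⟨x₀, hx₀C, hmax'⟩ := hCcl.isCompact.exists_isMaxOn hC
        ((continuous_norm.comp he_cont).continuousOn)
      have hmax := isMaxOn_iff.mp hmax'
      have hx₀range : x₀ ∈ Set.range stoneCechUnit := by
        by_contra hnx
        exact hcorV x₀ hnx hx₀C
      obtain ⟨u, rfl⟩ := hx₀range
      have hρ : ‖e (stoneCechUnit u)‖ < 1 := by rw [he_unit u]; exact u.2
      have hρ0 : (0:ℝ) ≤ ‖e (stoneCechUnit u)‖ := norm_nonneg _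
      refine ⟨(‖e (stoneCechUnit u)‖ + 1)/2, by linarith, by linarith, ?_⟩
      intro x hxnorm hPx
      have h5 := hmax x hPx
      simp only [Function.comp_apply] at h5
      rw [hxnorm] at h5
      linarith
    · refine ⟨1/2, by norm_num, by norm_num, ?_⟩
      intro x _ hPx
      exact hC ⟨x, hPx⟩
  -- restrict to the circle of radius r'
  have hπ := Real.pi_pos
  set z : ℝ → {w : ℂ // ‖w‖ < 1} := fun t =>
    ⟨(r' : ℂ) * (Circle.exp (2 * Real.pi * t) : ℂ), by
      rw [norm_mul]
      have h6 : ‖((Circle.exp (2 * Real.pi * t) : Circle) : ℂ)‖ = 1 := Circle.norm_coe _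
      rw [h6, mul_one]
      simpa [abs_of_pos hr'0] using hr'1⟩ with hzdef
  have hznorm : ∀ t, ‖(z t : ℂ)‖ = r' := by
    intro t
    rw [hzdef]
    simp only [norm_mul]
    have h6 : ‖((Circle.exp (2 * Real.pi * t) : Circle) : ℂ)‖ = 1 := Circle.norm_coe _
    rw [h6, mul_one]
    simp [abs_of_pos hr'0]
  have hzc : Continuous fun t => (z t : ℂ) := by
    apply continuous_const.mul
    exact continuous_subtype_val.comp (Circle.exp.continuous.comp (by fun_prop))
  set θ : ℝ → ℝ := fun t => G (stoneCechUnit (z t)) with hθdef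
  have hθc : Continuous θ :=
    G.continuous.comp (continuous_stoneCechUnit.comp ((hzc).subtype_mk _))
  set ψ : ℝ → ℝ := fun t => θ t - 2 * Real.pi * m * t with hψdef
  have hψc : Continuous ψ := by fun_prop
  apply winding_ivt ψ hψc
  · intro t _ hexp
    have hV := hr'V (stoneCechUnit (z t)) (by rw [he_unit]; exact hznorm t)
    apply hV
    rw [hPdef]
    simp only
    rw [he_unit (z t)]
    have hzt : ((z t : ℂ)) ^ m
        = (r' : ℂ) ^ m * Complex.exp ((2 * Real.pi * m * t : ℝ) * Complex.I) := by
      rw [hzdef]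
      simp only [Circle.coe_exp, mul_pow, ← Complex.exp_nat_mul]
      norm_cast
      push_cast
      ring_nf
    have hθt : Complex.exp (θ t * Complex.I) =
        - Complex.exp ((2 * Real.pi * m * t : ℝ) * Complex.I) := by
      have h7 : (θ t : ℂ) * Complex.I =
          (ψ t : ℂ) * Complex.I + ((2 * Real.pi * m * t : ℝ) : ℂ) * Complex.I := by
        rw [hψdef]
        push_cast
        ring
      rw [h7, Complex.exp_add, hexp]
      ring
    rw [hznorm t, hθt, hzt]
    push_cast
    ring
  · have hz01 : z 0 = z 1 := by
      rw [hzdef]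
      apply Subtype.ext
      simp only
      congr 1
      norm_num [Circle.exp_two_pi]
    have hθ01 : θ 0 = θ 1 := by rw [hθdef]; simp only [hz01]
    rw [hψdef]
    simp only
    rw [hθ01]
    have h8 : (2:ℝ) * Real.pi ≤ 2 * Real.pi * m := by
      have : (1:ℝ) ≤ (m:ℝ) := by exact_mod_cast hm1
      nlinarith
    linarith

end Aux

/-- The canonical map `βU∖U → S¹` (Gelfand dual of `C(S¹) → C_b(U)/C₀(U)`) is the
restriction to the corona of the Stone–Čech extension `e` of the inclusion `U ↪ ℂ`;
it takes values on the unit circle. The homomorphism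
`ℤ ≅ [S¹,S¹] → [βU∖U, S¹]` it induces is injective: if the composites of `z ↦ z^k` and
`z ↦ z^l` with this canonical map are homotopic, then `k = l`. -/
theorem corona_circle_classes_injective
    (e : StoneCech {z : ℂ // ‖z‖ < 1} → ℂ)
    (he_cont : Continuous e)
    (he_unit : ∀ u : {z : ℂ // ‖z‖ < 1}, e (stoneCechUnit u) = u.1)
    (he_corona : ∀ x : StoneCech {z : ℂ // ‖z‖ < 1},
      x ∉ Set.range stoneCechUnit → ‖e x‖ = 1)
    (k l : ℤ)
    (h : ContinuousMap.Homotopic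
      (⟨fun x : DiscCorona => (mkCircle (e x.1) (he_corona x.1 x.2)) ^ k,
        (continuous_zpow k).comp
          (continuous_mkCircle (he_cont.comp continuous_subtype_val) _)⟩)
      (⟨fun x : DiscCorona => (mkCircle (e x.1) (he_corona x.1 x.2)) ^ l,
        (continuous_zpow l).comp
          (continuous_mkCircle (he_cont.comp continuous_subtype_val) _)⟩)) :
    k = l := by
  by_contra hne
  rcases lt_or_gt_of_ne hne with hkl | hlk
  · exact main_aux e he_cont he_unit he_corona k l hkl h
  · exact main_aux e he_cont he_unit he_corona l k hlk h.symm
end
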